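/- (Claim 1 of the paper.) Let λ₁ ≥ λ₂ ≥ λ₃ with σ₁ > 0 and σ₂ > 0, and let 0 < ε ≤ 2/3. Then for all real s, t: (2(σ₂^{11}+σ₂^{22})/(σ₁σ₂^{11}))·s² + (2(σ₂^{11}+σ₂^{33})/(σ₁σ₂^{11}))·t² + (4λ₁/(σ₁σ₂^{11}))·s·t ≥ (2ε σ₁ (s+t)²)/(σ₁σ₂^{11}), provided σ₂^{11} = λ₂+λ₃ > 0. -/

import Mathlib

/-- Claim 1: For ordered λ ∈ Γ₂ (so σ₂^{11} = λ₂+λ₃ > 0) and 0 < ε ≤ 2/3,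
for all s, t:
(2(σ₂^{11}+σ₂^{22})/(σ₁σ₂^{11}))s² + (2(σ₂^{11}+σ₂^{33})/(σ₁σ₂^{11}))t²
  + (4λ₁/(σ₁σ₂^{11}))st ≥ 2εσ₁(s+t)²/(σ₁σ₂^{11}). -/
theorem claim1 (ε l1 l2 l3 : ℝ) (hord1 : l1 ≥ l2) (hord2 : l2 ≥ l3)
    (h1 : 0 < l1 + l2 + l3) (h2 : 0 < l1 * l2 + l1 * l3 + l2 * l3)
    (hε0 : 0 < ε) (hε : ε ≤ 2 / 3) (h11 : 0 < l2 + l3) :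
    ∀ s t : ℝ,
      2 * (((l1 + l2 + l3) - l1) + ((l1 + l2 + l3) - l2)) /
          ((l1 + l2 + l3) * ((l1 + l2 + l3) - l1)) * s ^ 2 +
        2 * (((l1 + l2 + l3) - l1) + ((l1 + l2 + l3) - l3)) /
          ((l1 + l2 + l3) * ((l1 + l2 + l3) - l1)) * t ^ 2 +
        4 * l1 / ((l1 + l2 + l3) * ((l1 + l2 + l3) - l1)) * (s * t) ≥
      2 * ε * (l1 + l2 + l3) * (s + t) ^ 2 /
          ((l1 + l2 + l3) * ((l1 + l2 + l3) - l1)) := by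
  intro s t
  have hD : 0 < (l1 + l2 + l3) * ((l1 + l2 + l3) - l1) := by
    apply mul_pos h1; linarith
  have ha : 0 < l1 + l2 + 4 * l3 := by
    nlinarith [sq_nonneg (l1 - 2*l2 - 2*l3), sq_nonneg (l2 - l3)]
  have key : 2 * (((l1 + l2 + l3) - l1) + ((l1 + l2 + l3) - l2)) * s ^ 2 +
      2 * (((l1 + l2 + l3) - l1) + ((l1 + l2 + l3) - l3)) * t ^ 2 +
      4 * l1 * (s * t) ≥ 2 * ε * (l1 + l2 + l3) * (s + t) ^ 2 := by
    nlinarith [mul_nonneg (mul_nonneg (by linarith : (0:ℝ) ≤ 2/3 - ε) h1.le) (sq_nonneg (s+t)),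
      sq_nonneg ((l1 + l2 + 4*l3) * s + (l1 - 2*l2 - 2*l3) * t),
      mul_nonneg h2.le (sq_nonneg t), ha, sq_nonneg (s+t)]
  rw [ge_iff_le, div_mul_eq_mul_div, div_mul_eq_mul_div, div_mul_eq_mul_div,
    ← add_div, ← add_div, div_le_div_iff₀ hD hD]
  nlinarith [mul_le_mul_of_nonneg_right key (le_of_lt hD)]
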